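/- Let n = 2m+1, let R_n be the dihedral quandle of order n, and let D(R_n) be its symmetric double with the good involution ρ exchanging x⁺ and x⁻. The quotient set D(R_n) ⊗ D(R_n) / ⟨τ, ρ⟩ has exactly 2(m+1) = n+1 elements, namely {E(k)^{+,+}, E(k)^{−,−}} and {E(k)^{+,−}, E(k)^{−,+}} for k = 0, 1, …, m, where E(k)^{ε,δ} = {(i, i+k)^{ε,δ}, (i, i−k)^{ε,δ} : i ∈ ℤ/nℤ}. -/

import Mathlib

/-- A quandle: a set with two binary operations `op` (`∗`) and `inv` (`∗̄`)
satisfying (Q1), (Q2), (Q3). -/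
structure QuandleStr (X : Type) where
  op : X → X → X
  inv : X → X → X
  q1 : ∀ x, op x x = x
  q2a : ∀ x y, inv (op x y) y = x
  q2b : ∀ x y, op (inv x y) y = x
  q3 : ∀ x y z, op (op x y) z = op (op x z) (op y z)

namespace QuandleStr

variable {X Y : Type} (Q : QuandleStr X)

lemma inv_self (x : X) : Q.inv x x = x := by
  have h := Q.q2a x x
  rwa [Q.q1] at h

lemma op_right_cancel {a b : X} (z : X) (h : Q.op a z = Q.op b z) : a = b := by
  have h2 := congrArg (fun t => Q.inv t z) h
  simpa [Q.q2a] using h2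

lemma distA (x y z : X) : Q.inv (Q.op x y) z = Q.op (Q.inv x z) (Q.inv y z) := by
  apply Q.op_right_cancel z
  rw [Q.q2b, Q.q3, Q.q2b, Q.q2b]

lemma distB (x y z : X) : Q.op (Q.inv x y) z = Q.inv (Q.op x z) (Q.op y z) := by
  have h : Q.op (Q.op (Q.inv x y) y) z = Q.op (Q.op (Q.inv x y) z) (Q.op y z) := Q.q3 _ _ _
  rw [Q.q2b] at h
  have h2 := congrArg (fun t => Q.inv t (Q.op y z)) h
  simpa [Q.q2a] using h2.symm

lemma distD (x y z : X) : Q.inv (Q.inv x y) z = Q.inv (Q.inv x z) (Q.inv y z) := by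
  apply Q.op_right_cancel z
  rw [Q.q2b, Q.distB, Q.q2b, Q.q2b]

/-- One step of the relation generating the tensor product:
`(x₁, x₂) ≈ (x₁ ∗ z, x₂ ∗ z)`. -/
def tensorStep (p q : X × X) : Prop :=
  ∃ z, q = (Q.op p.1 z, Q.op p.2 z)

/-- The equivalence relation `≈` defining the tensor product `X ⊗ X`:
the equivalence relation generated by `(x₁, x₂) ≈ (x₁ ∗ z, x₂ ∗ z)`. -/
def tensorEqv : X × X → X × X → Prop :=
  Relation.EqvGen Q.tensorStep

/-- The tensor product `X ⊗ X` of a quandle. -/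
def Tensor : Type :=
  Quotient (Relation.EqvGen.setoid Q.tensorStep)

/-- The symmetric double `D(X)` of a quandle, realized on `X × Bool`
(`(x, true)` is `x⁺` and `(x, false)` is `x⁻`), with
`x^ε ∗ y⁺ = (x∗y)^ε`, `x^ε ∗ y⁻ = (x∗̄y)^ε`, `x^ε ∗̄ y⁺ = (x∗̄y)^ε`,
`x^ε ∗̄ y⁻ = (x∗y)^ε`. -/
def double : QuandleStr (X × Bool) where
  op a b := (if b.2 then Q.op a.1 b.1 else Q.inv a.1 b.1, a.2)
  inv a b := (if b.2 then Q.inv a.1 b.1 else Q.op a.1 b.1, a.2)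
  q1 := by rintro ⟨x, ε⟩; cases ε <;> simp [Q.q1, Q.inv_self]
  q2a := by rintro ⟨x, ε⟩ ⟨y, δ⟩; cases δ <;> simp [Q.q2a, Q.q2b]
  q2b := by rintro ⟨x, ε⟩ ⟨y, δ⟩; cases δ <;> simp [Q.q2a, Q.q2b]
  q3 := by
    rintro ⟨x, ε⟩ ⟨y, δ⟩ ⟨z, γ⟩
    cases δ <;> cases γ
    · show (Q.inv (Q.inv x y) z, ε) = (Q.inv (Q.inv x z) (Q.inv y z), ε)
      rw [Q.distD]
    · show (Q.op (Q.inv x y) z, ε) = (Q.inv (Q.op x z) (Q.op y z), ε)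
      rw [Q.distB]
    · show (Q.inv (Q.op x y) z, ε) = (Q.op (Q.inv x z) (Q.inv y z), ε)
      rw [Q.distA]
    · show (Q.op (Q.op x y) z, ε) = (Q.op (Q.op x z) (Q.op y z), ε)
      rw [Q.q3]

/-- The equivalence relation generated by `≈` and the swap `τ`. -/
def tensorTauEqv : X × X → X × X → Prop :=
  Relation.EqvGen (fun p q => Q.tensorStep p q ∨ q = p.swap)

/-- The quotient `X ⊗ X / ⟨τ⟩`. -/
def TensorTau : Type :=
  Quotient (Relation.EqvGen.setoid (fun p q => Q.tensorStep p q ∨ q = p.swap))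

/-- The equivalence relation generated by `≈` and `(x₁, x₂) ↦ (ρ(x₁), ρ(x₂))`
for an involution `r` of `X`. -/
def tensorRhoEqv (r : X → X) : X × X → X × X → Prop :=
  Relation.EqvGen (fun p q => Q.tensorStep p q ∨ q = (r p.1, r p.2))

/-- The quotient `X ⊗ X / ⟨ρ⟩`. -/
def TensorRho (r : X → X) : Type :=
  Quotient (Relation.EqvGen.setoid (fun p q => Q.tensorStep p q ∨ q = (r p.1, r p.2)))

/-- The equivalence relation generated by `≈`, `τ` and `ρ`. -/
def tensorTauRhoEqv (r : X → X) : X × X → X × X → Prop :=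
  Relation.EqvGen (fun p q => Q.tensorStep p q ∨ q = p.swap ∨ q = (r p.1, r p.2))

/-- The quotient `X ⊗ X / ⟨τ, ρ⟩`. -/
def TensorTauRho (r : X → X) : Type :=
  Quotient (Relation.EqvGen.setoid
    (fun p q => Q.tensorStep p q ∨ q = p.swap ∨ q = (r p.1, r p.2)))

end QuandleStr

/-- The good involution `ρ` on the symmetric double `D(X) = X × Bool`,
exchanging `x⁺` and `x⁻`. -/
def doubleRho {X : Type} : X × Bool → X × Bool := fun a => (a.1, !a.2)

/-- The dihedral quandle `R_n` of order `n`: `ℤ/nℤ` with `x ∗ y = x ∗̄ y = 2y − x`. -/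
def dihedral (n : ℕ) : QuandleStr (ZMod n) where
  op x y := 2 * y - x
  inv x y := 2 * y - x
  q1 := by intro x; ring
  q2a := by intro x y; ring
  q2b := by intro x y; ring
  q3 := by intro x y z; ring

/-- The distance `d_n` on `ℤ/nℤ`:
`d_n(x, y) = min {|a − b| : a, b ∈ ℤ, a ≡ x, b ≡ y (mod n)}`. -/
noncomputable def ddist (n : ℕ) (x y : ZMod n) : ℕ :=
  sInf {d : ℕ | ∃ a b : ℤ, (a : ZMod n) = x ∧ (b : ZMod n) = y ∧ (a - b).natAbs = d}

/-- `x ∈ ℤ/nℤ` is represented by an even integer. -/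
def isEvenClass (n : ℕ) (x : ZMod n) : Prop :=
  ∃ a : ℤ, Even a ∧ (a : ZMod n) = x

/-- `x ∈ ℤ/nℤ` is represented by an odd integer. -/
def isOddClass (n : ℕ) (x : ZMod n) : Prop :=
  ∃ a : ℤ, Odd a ∧ (a : ZMod n) = x

/-- `E(k)^{ε,δ} = {(i, i+k)^{ε,δ}, (i, i−k)^{ε,δ} : i ∈ ℤ/nℤ}`. -/
def EsetD (n k : ℕ) (ε δ : Bool) : Set ((ZMod n × Bool) × (ZMod n × Bool)) :=
  {p | ∃ i : ZMod n,
    p = ((i, ε), (i + (k : ZMod n), δ)) ∨ p = ((i, ε), (i - (k : ZMod n), δ))}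

namespace St13

variable (m : ℕ)

/-- The minimal distance invariant. -/
def kv (m : ℕ) (d : ZMod (2 * m + 1)) : ℕ := min d.val (2 * m + 1 - d.val)

/-- Full invariant of a pair. -/
def Inv (m : ℕ) (p : (ZMod (2 * m + 1) × Bool) × (ZMod (2 * m + 1) × Bool)) : ℕ × Bool :=
  (kv m (p.2.1 - p.1.1), xor p.1.2 p.2.2)

/-- The generating relation. -/
def Rrel (m : ℕ) (p q : (ZMod (2 * m + 1) × Bool) × (ZMod (2 * m + 1) × Bool)) : Prop :=
  ((dihedral (2 * m + 1)).double).tensorStep p q ∨ q = p.swap ∨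
    q = (doubleRho p.1, doubleRho p.2)

lemma kv_neg (d : ZMod (2 * m + 1)) : kv m (-d) = kv m d := by
  rcases eq_or_ne d 0 with rfl | h
  · simp
  · have h1 : (-d).val = 2 * m + 1 - d.val := by
      rw [ZMod.neg_val]; simp [h]
    have h2 : d.val < 2 * m + 1 := ZMod.val_lt d
    have h3 : d.val ≠ 0 := fun hh => h (by rwa [ZMod.val_eq_zero] at hh)
    unfold kv
    omega

lemma kv_le (d : ZMod (2 * m + 1)) : kv m d ≤ m := by
  have := ZMod.val_lt d
  unfold kv
  omega

lemma val_inj' {a b : ZMod (2 * m + 1)} (h : a.val = b.val) : a = b :=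
  ZMod.val_injective _ h

lemma kv_inj {d e : ZMod (2 * m + 1)} (h : kv m d = kv m e) : e = d ∨ e = -d := by
  have hd := ZMod.val_lt d
  have he := ZMod.val_lt e
  unfold kv at h
  have hcases : d.val = e.val ∨ d.val + e.val = 2 * m + 1 := by omega
  rcases hcases with hc | hc
  · exact Or.inl (val_inj' m hc.symm)
  · right
    have hd0 : d ≠ 0 := by
      intro hh
      rw [hh] at hc
      simp at hc
      omega
    have h1 : (-d).val = 2 * m + 1 - d.val := by rw [ZMod.neg_val]; simp [hd0]
    apply val_inj' m
    omega

lemma kv_cast {k : ℕ} (hk : k ≤ m) : kv m ((k : ZMod (2 * m + 1))) = k := by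
  have h1 : ((k : ZMod (2 * m + 1))).val = k := by
    rw [ZMod.val_natCast, Nat.mod_eq_of_lt (by omega)]
  unfold kv
  omega

lemma step_rel (p : (ZMod (2 * m + 1) × Bool) × (ZMod (2 * m + 1) × Bool)) (c : ZMod (2 * m + 1)) :
    Rrel m p ((2 * c - p.1.1, p.1.2), (2 * c - p.2.1, p.2.2)) :=
  Or.inl ⟨(c, true), rfl⟩

lemma inv_of_rel {p q : (ZMod (2 * m + 1) × Bool) × (ZMod (2 * m + 1) × Bool)}
    (h : Rrel m p q) : Inv m q = Inv m p := by
  obtain ⟨⟨x, ε⟩, ⟨y, δ⟩⟩ := p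
  rcases h with ⟨⟨c, s⟩, rfl⟩ | rfl | rfl
  · show Inv m ((if s then _ else _, ε), (if s then _ else _, δ)) = _
    have hop : ∀ a : ZMod (2 * m + 1),
        (if s then (dihedral (2 * m + 1)).op a c else (dihedral (2 * m + 1)).inv a c)
          = 2 * c - a := by
      intro a; cases s <;> rfl
    rw [hop, hop]
    unfold Inv
    have hdiff : (2 * c - y) - (2 * c - x) = -(y - x) := by ring
    simp only [hdiff, kv_neg]
  · unfold Inv
    have hdiff : (x - y) = -(y - x) := by ring
    simp only [Prod.swap, hdiff, kv_neg]
    rw [Bool.xor_comm]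
  · unfold Inv doubleRho
    simp only
    congr 1
    cases ε <;> cases δ <;> rfl

lemma inv_of_eqv {p q : (ZMod (2 * m + 1) × Bool) × (ZMod (2 * m + 1) × Bool)}
    (h : Relation.EqvGen (Rrel m) p q) : Inv m p = Inv m q := by
  induction h with
  | rel a b hab => exact (inv_of_rel m hab).symm
  | refl a => rfl
  | symm a b _ ih => exact ih.symm
  | trans a b c _ _ ih1 ih2 => exact ih1.trans ih2

lemma half (a : ZMod (2 * m + 1)) : 2 * (((m : ZMod (2 * m + 1)) + 1) * a) = a := by
  have h : ((2 * m + 1 : ℕ) : ZMod (2 * m + 1)) = 0 := ZMod.natCast_self _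
  push_cast at h
  linear_combination a * h

lemma two_step (x y x' : ZMod (2 * m + 1)) (ε δ : Bool) :
    Relation.EqvGen (Rrel m) ((x, ε), (y, δ)) ((x', ε), (x' + (y - x), δ)) := by
  set c : ZMod (2 * m + 1) := ((m : ZMod (2 * m + 1)) + 1) * (x' - x) with hc
  have h2c : 2 * c = x' - x := half m _
  have h1 : Relation.EqvGen (Rrel m) ((x, ε), (y, δ))
      ((2 * 0 - x, ε), (2 * 0 - y, δ)) :=
    Relation.EqvGen.rel _ _ (step_rel m ((x, ε), (y, δ)) 0)
  have h2 : Relation.EqvGen (Rrel m) ((2 * 0 - x, ε), (2 * 0 - y, δ))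
      ((2 * c - (2 * 0 - x), ε), (2 * c - (2 * 0 - y), δ)) :=
    Relation.EqvGen.rel _ _ (step_rel m ((2 * 0 - x, ε), (2 * 0 - y, δ)) c)
  have he : ((2 * c - (2 * 0 - x), ε), (2 * c - (2 * 0 - y), δ))
      = (((x' : ZMod (2 * m + 1)), ε), (x' + (y - x), δ)) := by
    have e1 : 2 * c - (2 * 0 - x) = x' := by linear_combination h2c
    have e2 : 2 * c - (2 * 0 - y) = x' + (y - x) := by linear_combination h2c
    rw [e1, e2]
  rw [he] at h2
  exact Relation.EqvGen.trans _ _ _ h1 h2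

lemma swap_eqv (x y : ZMod (2 * m + 1)) (ε δ : Bool) :
    Relation.EqvGen (Rrel m) ((x, ε), (y, δ)) ((y, ε), (x, δ)) := by
  by_cases h : δ = ε
  · subst h
    exact Relation.EqvGen.rel _ _ (Or.inr (Or.inl rfl))
  · have h1 : (!δ) = ε := by cases ε <;> cases δ <;> simp_all
    have h2 : (!ε) = δ := by cases ε <;> cases δ <;> simp_all
    have s1 : Relation.EqvGen (Rrel m) ((x, ε), (y, δ)) ((y, δ), (x, ε)) :=
      Relation.EqvGen.rel _ _ (Or.inr (Or.inl rfl))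
    have s2 : Relation.EqvGen (Rrel m) ((y, δ), (x, ε)) ((y, !δ), (x, !ε)) :=
      Relation.EqvGen.rel _ _ (Or.inr (Or.inr rfl))
    rw [h1, h2] at s2
    exact Relation.EqvGen.trans _ _ _ s1 s2

lemma key_eqv (x y x' y' : ZMod (2 * m + 1)) (ε δ : Bool)
    (hk : kv m (y - x) = kv m (y' - x')) :
    Relation.EqvGen (Rrel m) ((x, ε), (y, δ)) ((x', ε), (y', δ)) := by
  rcases kv_inj m hk with hd | hd
  · have h1 := two_step m x y x' ε δ
    have he : x' + (y - x) = y' := by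
      have : y' - x' = y - x := hd
      linear_combination -this
    rwa [he] at h1
  · have h1 := swap_eqv m x y ε δ
    have h2 := two_step m y x x' ε δ
    have he : x' + (x - y) = y' := by
      have : y' - x' = -(y - x) := hd
      linear_combination -this
    rw [he] at h2
    exact Relation.EqvGen.trans _ _ _ h1 h2

lemma eqv_of_inv {p q : (ZMod (2 * m + 1) × Bool) × (ZMod (2 * m + 1) × Bool)}
    (h : Inv m p = Inv m q) : Relation.EqvGen (Rrel m) p q := by
  obtain ⟨⟨x, ε⟩, ⟨y, δ⟩⟩ := p
  obtain ⟨⟨x', ε'⟩, ⟨y', δ'⟩⟩ := q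
  unfold Inv at h
  simp only [Prod.mk.injEq] at h
  obtain ⟨hk, hx⟩ := h
  have hs : (ε' = ε ∧ δ' = δ) ∨ (ε' = !ε ∧ δ' = !δ) := by
    cases ε <;> cases δ <;> cases ε' <;> cases δ' <;> simp_all
  rcases hs with ⟨rfl, rfl⟩ | ⟨rfl, rfl⟩
  · exact key_eqv m x y x' y' _ _ hk
  · have h1 := key_eqv m x y x' y' ε δ hk
    have h2 : Relation.EqvGen (Rrel m) ((x', ε), (y', δ)) ((x', !ε), (y', !δ)) :=
      Relation.EqvGen.rel _ _ (Or.inr (Or.inr rfl))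
    exact Relation.EqvGen.trans _ _ _ h1 h2

lemma ttr_eq :
    ((dihedral (2 * m + 1)).double).tensorTauRhoEqv doubleRho = Relation.EqvGen (Rrel m) := rfl

lemma class_eq (p : (ZMod (2 * m + 1) × Bool) × (ZMod (2 * m + 1) × Bool)) :
    {q | ((dihedral (2 * m + 1)).double).tensorTauRhoEqv doubleRho p q}
      = {q | Inv m q = Inv m p} := by
  ext q
  rw [ttr_eq]
  constructor
  · intro h
    exact (inv_of_eqv m h).symm
  · intro h
    exact eqv_of_inv m h.symm

lemma fiber_eq {k : ℕ} (hk : k ≤ m) (b : Bool) :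
    {q : (ZMod (2 * m + 1) × Bool) × (ZMod (2 * m + 1) × Bool) | Inv m q = (k, b)}
      = EsetD (2 * m + 1) k true (!b) ∪ EsetD (2 * m + 1) k false b := by
  ext ⟨⟨i, ε⟩, ⟨j, δ⟩⟩
  simp only [Set.mem_setOf_eq, Set.mem_union, EsetD, Inv, Prod.mk.injEq]
  constructor
  · rintro ⟨hkv, hb⟩
    have hd : j - i = (k : ZMod (2 * m + 1)) ∨ j - i = -(k : ZMod (2 * m + 1)) := by
      have : kv m ((k : ZMod (2 * m + 1))) = kv m (j - i) := by rw [kv_cast m hk, hkv]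
      exact kv_inj m this
    have hj : j = i + (k : ZMod (2 * m + 1)) ∨ j = i - (k : ZMod (2 * m + 1)) := by
      rcases hd with h | h
      · left; linear_combination h
      · right; linear_combination h
    cases ε
    · right
      refine ⟨i, ?_⟩
      have hδ : δ = b := by cases δ <;> cases b <;> simp_all
      rcases hj with h | h
      · exact Or.inl (by simp [h, hδ])
      · exact Or.inr (by simp [h, hδ])
    · left
      refine ⟨i, ?_⟩
      have hδ : δ = !b := by cases δ <;> cases b <;> simp_all
      rcases hj with h | h
      · exact Or.inl (by simp [h, hδ])
      · exact Or.inr (by simp [h, hδ])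
  · rintro (⟨i', ⟨⟨rfl, rfl⟩, rfl, rfl⟩ | ⟨⟨rfl, rfl⟩, rfl, rfl⟩⟩ |
      ⟨i', ⟨⟨rfl, rfl⟩, rfl, rfl⟩ | ⟨⟨rfl, rfl⟩, rfl, rfl⟩⟩) <;>
      refine ⟨?_, by simp⟩ <;>
      simp only [add_sub_cancel_left, sub_sub_cancel_left, kv_neg] <;>
      exact kv_cast m hk

lemma inv_canon (k : ℕ) (hk : k ≤ m) (tb : Bool) :
    Inv m (((0 : ZMod (2 * m + 1)), true), ((k : ZMod (2 * m + 1)), tb)) = (k, !tb) := by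
  unfold Inv
  rw [sub_zero, kv_cast m hk]
  cases tb <;> rfl

end St13

/-- for `n = 2m+1`, the quotient `D(R_n) ⊗ D(R_n) / ⟨τ, ρ⟩` has exactly
`2(m+1) = n+1` elements, namely `E(k)^{+,+} ∪ E(k)^{−,−}` and
`E(k)^{+,−} ∪ E(k)^{−,+}` for `k = 0, …, m`. -/
theorem statement13 (m : ℕ) :
    ({S : Set ((ZMod (2 * m + 1) × Bool) × (ZMod (2 * m + 1) × Bool)) |
        ∃ p, S = {q | ((dihedral (2 * m + 1)).double).tensorTauRhoEqv doubleRho p q}} =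
      {S | ∃ k ≤ m,
        S = EsetD (2 * m + 1) k true true ∪ EsetD (2 * m + 1) k false false ∨
        S = EsetD (2 * m + 1) k true false ∪ EsetD (2 * m + 1) k false true}) ∧
    Nat.card (((dihedral (2 * m + 1)).double).TensorTauRho doubleRho) = 2 * (m + 1) := by
  constructor
  · ext S
    simp only [Set.mem_setOf_eq]
    constructor
    · rintro ⟨p, rfl⟩
      rcases hI : St13.Inv m p with ⟨k, b⟩
      have hkk : k = St13.kv m (p.2.1 - p.1.1) := (congrArg Prod.fst hI).symm
      have hk : k ≤ m := by rw [hkk]; exact St13.kv_le m _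
      refine ⟨k, hk, ?_⟩
      have hcls := St13.class_eq m p
      rw [hI] at hcls
      cases b
      · left
        rw [hcls]
        simpa using St13.fiber_eq m hk false
      · right
        rw [hcls]
        simpa using St13.fiber_eq m hk true
    · rintro ⟨k, hk, rfl | rfl⟩
      · refine ⟨(((0 : ZMod (2 * m + 1)), true), ((k : ZMod (2 * m + 1)), true)), ?_⟩
        rw [St13.class_eq, St13.inv_canon m k hk true]
        have h := St13.fiber_eq m hk false
        simp only [Bool.not_false, Bool.not_true] at h ⊢
        exact h.symm
      · refine ⟨(((0 : ZMod (2 * m + 1)), true), ((k : ZMod (2 * m + 1)), false)), ?_⟩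
        rw [St13.class_eq, St13.inv_canon m k hk false]
        have h := St13.fiber_eq m hk true
        simp only [Bool.not_false, Bool.not_true] at h ⊢
        exact h.symm
  · let f : (ZMod (2 * m + 1) × Bool) × (ZMod (2 * m + 1) × Bool) → Fin (m + 1) × Bool :=
      fun p => (⟨(St13.Inv m p).1, Nat.lt_succ_of_le (St13.kv_le m _)⟩, (St13.Inv m p).2)
    have hresp : ∀ a b, Relation.EqvGen (St13.Rrel m) a b → f a = f b := by
      intro a b hab
      have h := St13.inv_of_eqv m hab
      have h1 : (f a).1 = (f b).1 := Fin.ext (congrArg Prod.fst h)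
      have h2 : (f a).2 = (f b).2 := by
        show (St13.Inv m a).2 = (St13.Inv m b).2
        exact congrArg Prod.snd h
      exact Prod.ext h1 h2
    let F : (((dihedral (2 * m + 1)).double).TensorTauRho doubleRho) → Fin (m + 1) × Bool :=
      Quotient.lift f hresp
    have hbij : Function.Bijective F := by
      constructor
      · intro a b
        induction a using Quotient.inductionOn with
        | h p =>
          induction b using Quotient.inductionOn with
          | h q =>
            intro h
            apply Quotient.sound
            refine St13.eqv_of_inv m ?_
            have h1 := congrArg (fun t : Fin (m + 1) × Bool => ((t.1 : ℕ), t.2)) h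
            exact h1
      · rintro ⟨⟨k, hk⟩, b⟩
        refine ⟨Quotient.mk _ (((0 : ZMod (2 * m + 1)), true), ((k : ZMod (2 * m + 1)), !b)), ?_⟩
        have hc := St13.inv_canon m k (by omega) (!b)
        have h1 := congrArg Prod.fst hc
        have h2 := congrArg Prod.snd hc
        simp only at h1 h2
        refine Prod.ext (Fin.ext ?_) ?_
        · exact h1
        · show (St13.Inv m _).2 = _
          simpa using h2
    have hcard := Nat.card_eq_of_bijective F hbij
    rw [hcard]
    simp [Nat.card_eq_fintype_card]
    ring
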